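/- (Kearns–Saul inequality) For every p ∈ [0,1] with p ≠ 1/2 (and p ≠ 0, 1) and every real t, one has (1−p)·exp(−t·p) + p·exp(t·(1−p)) ≤ exp( (1−2p) / (4·log((1−p)/p)) · t² ). -/

import Mathlib

open Real Set

namespace KS

noncomputable def D (p t : ℝ) : ℝ := 1 - p + p * Real.exp t
noncomputable def q (p t : ℝ) : ℝ := p * Real.exp t / D p t
noncomputable def F (p C t : ℝ) : ℝ := C * t ^ 2 + p * t - Real.log (D p t)
noncomputable def F1 (p C t : ℝ) : ℝ := 2 * C * t + p - q p t

variable {p : ℝ}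

lemma D_pos (hp0 : 0 < p) (hp1 : p < 1) (t : ℝ) : 0 < D p t := by
  have := Real.exp_pos t
  unfold D; nlinarith

lemma q_pos (hp0 : 0 < p) (hp1 : p < 1) (t : ℝ) : 0 < q p t :=
  div_pos (by positivity) (D_pos hp0 hp1 t)

lemma q_lt_one (hp0 : 0 < p) (hp1 : p < 1) (t : ℝ) : q p t < 1 := by
  rw [q, div_lt_one (D_pos hp0 hp1 t)]
  unfold D; nlinarith [Real.exp_pos t]

lemma q_mono (hp0 : 0 < p) (hp1 : p < 1) : Monotone (q p) := by
  intro s t hst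
  rw [q, q, div_le_div_iff₀ (D_pos hp0 hp1 s) (D_pos hp0 hp1 t)]
  unfold D
  nlinarith [mul_nonneg (mul_nonneg hp0.le (by linarith : (0:ℝ) ≤ 1 - p))
    (sub_nonneg.2 (Real.exp_le_exp.2 hst))]

lemma hasDerivAt_D (p t : ℝ) : HasDerivAt (D p) (p * Real.exp t) t := by
  exact ((Real.hasDerivAt_exp t).const_mul p).const_add (1 - p)

lemma hasDerivAt_q (hp0 : 0 < p) (hp1 : p < 1) (t : ℝ) :
    HasDerivAt (q p) (q p t * (1 - q p t)) t := by
  have hD := D_pos hp0 hp1 t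
  have h := ((Real.hasDerivAt_exp t).const_mul p).div (hasDerivAt_D p t) (ne_of_gt hD)
  have h2 : q p t * (1 - q p t)
      = (p * Real.exp t * D p t - p * Real.exp t * (p * Real.exp t)) / (D p t) ^ 2 := by
    rw [q, D]
    have h0 : (1 : ℝ) - p + p * Real.exp t ≠ 0 := ne_of_gt hD
    field_simp
  rw [h2]; exact h

lemma hasDerivAt_F (hp0 : 0 < p) (hp1 : p < 1) (C t : ℝ) :
    HasDerivAt (F p C) (F1 p C t) t := by
  have hD := D_pos hp0 hp1 t
  have h1 : HasDerivAt (fun s : ℝ => s ^ 2) (2 * t) t := by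
    simpa using hasDerivAt_pow 2 t
  have h1' := h1.const_mul C
  have h2 : HasDerivAt (fun s : ℝ => p * s) p t := by
    simpa using (hasDerivAt_id t).const_mul p
  have h3 : HasDerivAt (fun s : ℝ => Real.log (D p s)) ((D p t)⁻¹ * (p * Real.exp t)) t :=
    (Real.hasDerivAt_log (ne_of_gt hD)).comp t (hasDerivAt_D p t)
  have h := (h1'.add h2).sub h3
  refine h.congr_deriv ?_
  rw [F1, q, div_eq_mul_inv]
  ring

lemma hasDerivAt_F1 (hp0 : 0 < p) (hp1 : p < 1) (C t : ℝ) :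
    HasDerivAt (F1 p C) (2 * C - q p t * (1 - q p t)) t := by
  have h1 : HasDerivAt (fun s : ℝ => 2 * C * s + p) (2 * C) t := by
    simpa using ((hasDerivAt_id t).const_mul (2 * C)).add_const p
  exact h1.sub (hasDerivAt_q hp0 hp1 t)

lemma contF (hp0 : 0 < p) (hp1 : p < 1) (C : ℝ) : Continuous (F p C) :=
  continuous_iff_continuousAt.2 fun x => (hasDerivAt_F hp0 hp1 C x).continuousAt

lemma contF1 (hp0 : 0 < p) (hp1 : p < 1) (C : ℝ) : Continuous (F1 p C) :=
  continuous_iff_continuousAt.2 fun x => (hasDerivAt_F1 hp0 hp1 C x).continuousAt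

lemma contq (hp0 : 0 < p) (hp1 : p < 1) : Continuous (q p) :=
  continuous_iff_continuousAt.2 fun x => (hasDerivAt_q hp0 hp1 x).continuousAt

lemma F1_mono (hp0 : 0 < p) (hp1 : p < 1) (C a b : ℝ)
    (h : ∀ s ∈ Icc a b, 0 ≤ 2 * C - q p s * (1 - q p s)) :
    MonotoneOn (F1 p C) (Icc a b) := by
  apply monotoneOn_of_deriv_nonneg (convex_Icc a b) ((contF1 hp0 hp1 C).continuousOn)
  · intro s hs
    exact (hasDerivAt_F1 hp0 hp1 C s).differentiableAt.differentiableWithinAt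
  · intro s hs
    rw [(hasDerivAt_F1 hp0 hp1 C s).deriv]
    exact h s (interior_subset hs)

lemma F_mono (hp0 : 0 < p) (hp1 : p < 1) (C a b : ℝ)
    (h : ∀ s ∈ Icc a b, 0 ≤ F1 p C s) :
    MonotoneOn (F p C) (Icc a b) := by
  apply monotoneOn_of_deriv_nonneg (convex_Icc a b) ((contF hp0 hp1 C).continuousOn)
  · intro s hs
    exact (hasDerivAt_F hp0 hp1 C s).differentiableAt.differentiableWithinAt
  · intro s hs
    rw [(hasDerivAt_F hp0 hp1 C s).deriv]
    exact h s (interior_subset hs)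

lemma F_anti (hp0 : 0 < p) (hp1 : p < 1) (C a b : ℝ)
    (h : ∀ s ∈ Icc a b, F1 p C s ≤ 0) :
    AntitoneOn (F p C) (Icc a b) := by
  apply antitoneOn_of_deriv_nonpos (convex_Icc a b) ((contF hp0 hp1 C).continuousOn)
  · intro s hs
    exact (hasDerivAt_F hp0 hp1 C s).differentiableAt.differentiableWithinAt
  · intro s hs
    rw [(hasDerivAt_F hp0 hp1 C s).deriv]
    exact h s (interior_subset hs)



lemma log_le_aux {x : ℝ} (hx : 1 ≤ x) : Real.log x ≤ (x ^ 2 - 1) / (2 * x) := by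
  have h0 : (0:ℝ) < x := lt_of_lt_of_le one_pos hx
  set g : ℝ → ℝ := fun y => y / 2 - (2 * y)⁻¹ - Real.log y with hg
  have hd : ∀ y : ℝ, 0 < y → HasDerivAt g ((y - 1) ^ 2 / (2 * y ^ 2)) y := by
    intro y hy
    have hy0 : y ≠ 0 := ne_of_gt hy
    have h1 : HasDerivAt (fun y : ℝ => y / 2) (1 / 2) y := by
      simpa using (hasDerivAt_id y).div_const 2
    have h2 : HasDerivAt (fun y : ℝ => (2 * y)⁻¹) (-2 / (2 * y) ^ 2) y := by
      refine (((hasDerivAt_id y).const_mul 2).inv (by simp [hy0] : 2 * id y ≠ 0)).congr_deriv ?_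
      simp
    have h3 := Real.hasDerivAt_log hy0
    have h := (h1.sub h2).sub h3
    refine h.congr_deriv ?_
    field_simp
    ring
  have mono : MonotoneOn g (Ici 1) := by
    apply monotoneOn_of_deriv_nonneg (convex_Ici 1)
    · intro y hy
      exact (hd y (lt_of_lt_of_le one_pos hy)).continuousAt.continuousWithinAt
    · intro y hy
      rw [interior_Ici] at hy
      exact (hd y (lt_trans one_pos hy)).differentiableAt.differentiableWithinAt
    · intro y hy
      rw [interior_Ici] at hy
      rw [(hd y (lt_trans one_pos hy)).deriv]
      positivity
  have h1 : g 1 ≤ g x := mono (self_mem_Ici) hx hx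
  have hg1 : g 1 = 0 := by norm_num [hg]
  have hgx : g x = (x ^ 2 - 1) / (2 * x) - Real.log x := by
    rw [hg]
    have : x / 2 - (2 * x)⁻¹ = (x ^ 2 - 1) / (2 * x) := by
      field_simp
    rw [← this]
  rw [hg1, hgx] at h1
  linarith


set_option maxHeartbeats 1000000 in
lemma F_nonneg (hp0 : 0 < p) (hp2 : p < 1/2) (t : ℝ) :
    0 ≤ F p ((1 - 2*p) / (4 * Real.log ((1 - p) / p))) t := by
  have hp1 : p < 1 := by linarith
  set L := Real.log ((1 - p) / p) with hLdef
  set C := (1 - 2*p) / (4 * L) with hCdef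
  have hx1 : 1 < (1 - p) / p := by rw [lt_div_iff₀ hp0]; linarith
  have hL : 0 < L := Real.log_pos hx1
  have hCL : 4 * C * L = 1 - 2*p := by
    rw [hCdef]; field_simp
  have hC : 0 < C := by
    rw [hCdef]; apply div_pos <;> linarith
  have hexpL : Real.exp L = (1 - p) / p := Real.exp_log (by positivity)
  have hE : Real.exp (2 * L) = ((1 - p) / p) ^ 2 := by
    rw [two_mul, Real.exp_add, hexpL]; ring
  have hD2L : D p (2 * L) = (1 - p) / p := by
    rw [D, hE]; field_simp; ring
  have hq0 : q p 0 = p := by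
    rw [q, D]; norm_num
  have hq2L : q p (2 * L) = 1 - p := by
    rw [q, hD2L, hE, div_eq_iff (by positivity : (1 - p) / p ≠ 0)]
    field_simp
  have hF0 : F p C 0 = 0 := by simp [F, D]
  have hF10 : F1 p C 0 = 0 := by simp [F1, hq0]
  have hF2L : F p C (2 * L) = 0 := by
    rw [F, hD2L, ← hLdef]
    linear_combination L * hCL
  have hF12L : F1 p C (2 * L) = 0 := by
    rw [F1, hq2L]
    linear_combination hCL
  have keyC : p * (1 - p) ≤ 2 * C := by
    have h1 : L ≤ (((1 - p) / p) ^ 2 - 1) / (2 * ((1 - p) / p)) := log_le_aux hx1.le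
    have h2 : (((1 - p) / p) ^ 2 - 1) / (2 * ((1 - p) / p)) = (1 - 2*p) / (2 * (p * (1 - p))) := by
      rw [div_eq_div_iff (by positivity) (by nlinarith)]
      field_simp
      ring
    rw [h2] at h1
    have h3 : p * (1 - p) * (2 * L) ≤ 1 - 2*p := by
      have h4 := (le_div_iff₀ (by nlinarith : (0:ℝ) < 2 * (p * (1 - p)))).1 h1
      nlinarith [h4]
    have h6 : 2 * C = (1 - 2*p) / (2 * L) := by
      rw [hCdef]; field_simp; ring
    rw [h6, le_div_iff₀ (by linarith : (0:ℝ) < 2 * L)]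
    linarith
  rcases le_or_gt t 0 with ht | ht
  · -- t ≤ 0
    have hmono : MonotoneOn (F1 p C) (Icc t 0) := by
      apply F1_mono hp0 hp1
      intro s hs
      have hqs : q p s ≤ p := by
        have := q_mono hp0 hp1 hs.2
        rwa [hq0] at this
      have h1 := q_pos hp0 hp1 s
      nlinarith [mul_nonneg (sub_nonneg.2 hqs) (by linarith : (0:ℝ) ≤ 1 - p - q p s)]
    have hF1le : ∀ s ∈ Icc t 0, F1 p C s ≤ 0 := by
      intro s hs
      have := hmono hs (right_mem_Icc.2 ht) hs.2
      linarith [hF10]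
    have hanti : AntitoneOn (F p C) (Icc t 0) := F_anti hp0 hp1 C t 0 hF1le
    have := hanti (left_mem_Icc.2 ht) (right_mem_Icc.2 ht) ht
    linarith [hF0]
  · rcases le_or_gt t (2 * L) with ht2 | ht2
    · -- 0 < t ≤ 2L : minimum argument
      have h2L : (0:ℝ) ≤ 2 * L := by linarith
      obtain ⟨m, hmI, hmin⟩ := (isCompact_Icc (a := (0:ℝ)) (b := 2 * L)).exists_isMinOn
        (nonempty_Icc.2 h2L) ((contF hp0 hp1 C).continuousOn)
      have htI : t ∈ Icc (0:ℝ) (2 * L) := ⟨ht.le, ht2⟩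
      have hFt : F p C m ≤ F p C t := hmin htI
      suffices h : 0 ≤ F p C m by linarith
      by_contra hneg
      push_neg at hneg
      have hm0 : m ≠ 0 := by
        intro h; rw [h, hF0] at hneg; linarith
      have hm2 : m ≠ 2 * L := by
        intro h; rw [h, hF2L] at hneg; linarith
      have hmo : m ∈ Ioo (0:ℝ) (2 * L) := ⟨hmI.1.lt_of_ne (Ne.symm hm0), hmI.2.lt_of_ne hm2⟩
      have hder : F1 p C m = 0 := by
        have hloc : IsLocalMin (F p C) m := hmin.isLocalMin (Icc_mem_nhds hmo.1 hmo.2)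
        have h := hloc.deriv_eq_zero
        rwa [(hasDerivAt_F hp0 hp1 C m).deriv] at h
      rcases le_or_gt (q p m * (1 - q p m)) (2 * C) with hq | hq
      · rcases le_or_gt (q p m) (1/2) with hhalf | hhalf
        · -- F'' ≥ 0 on [0, m]
          have hmono : MonotoneOn (F1 p C) (Icc 0 m) := by
            apply F1_mono hp0 hp1
            intro s hs
            have h1 : q p s ≤ q p m := q_mono hp0 hp1 hs.2
            have h2 := q_pos hp0 hp1 s
            nlinarith [mul_nonneg (sub_nonneg.2 h1)
              (by linarith : (0:ℝ) ≤ 1 - q p m - q p s)]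
          have hge : ∀ s ∈ Icc (0:ℝ) m, 0 ≤ F1 p C s := by
            intro s hs
            have := hmono (left_mem_Icc.2 hmo.1.le) hs hs.1
            linarith [hF10]
          have hmonoF : MonotoneOn (F p C) (Icc 0 m) := F_mono hp0 hp1 C 0 m hge
          have := hmonoF (left_mem_Icc.2 hmo.1.le) (right_mem_Icc.2 hmo.1.le) hmo.1.le
          linarith [hF0]
        · -- F'' ≥ 0 on [m, 2L]
          have hmono : MonotoneOn (F1 p C) (Icc m (2 * L)) := by
            apply F1_mono hp0 hp1
            intro s hs
            have h1 : q p m ≤ q p s := q_mono hp0 hp1 hs.1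
            have h2 := q_lt_one hp0 hp1 s
            nlinarith [mul_nonneg (sub_nonneg.2 h1)
              (by linarith : (0:ℝ) ≤ q p s + q p m - 1)]
          have hle : ∀ s ∈ Icc m (2 * L), F1 p C s ≤ 0 := by
            intro s hs
            have := hmono hs (right_mem_Icc.2 hmo.2.le) hs.2
            linarith [hF12L]
          have hantiF : AntitoneOn (F p C) (Icc m (2 * L)) := F_anti hp0 hp1 C m (2 * L) hle
          have := hantiF (left_mem_Icc.2 hmo.2.le) (right_mem_Icc.2 hmo.2.le) hmo.2.le
          linarith [hF2L]
      · -- 2C < q(m)(1-q(m)) : F strictly decreasing to the right of m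
        have hopen : IsOpen {s : ℝ | 2 * C < q p s * (1 - q p s)} :=
          isOpen_lt continuous_const ((contq hp0 hp1).mul (continuous_const.sub (contq hp0 hp1)))
        obtain ⟨δ, hδ, hball⟩ := Metric.isOpen_iff.1 hopen m hq
        set y := min (m + δ / 2) (2 * L) with hy
        have hmy : m < y := lt_min (by linarith) hmo.2
        have hsub : ∀ s ∈ Ioo m y, 2 * C < q p s * (1 - q p s) := by
          intro s hs
          apply hball
          rw [Metric.mem_ball, Real.dist_eq, abs_sub_lt_iff]
          have hy1 : y ≤ m + δ / 2 := min_le_left _ _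
          constructor
          · linarith [hs.1, hs.2]
          · linarith [hs.1]
        have hF1neg : ∀ s ∈ Ioo m y, F1 p C s < 0 := by
          intro s hs
          have hanti : StrictAntiOn (F1 p C) (Icc m s) := by
            apply strictAntiOn_of_deriv_neg (convex_Icc m s) ((contF1 hp0 hp1 C).continuousOn)
            intro u hu
            rw [interior_Icc] at hu
            rw [(hasDerivAt_F1 hp0 hp1 C u).deriv]
            have : 2 * C < q p u * (1 - q p u) := hsub u ⟨hu.1, lt_trans hu.2 hs.2⟩
            linarith
          have := hanti (left_mem_Icc.2 hs.1.le) (right_mem_Icc.2 hs.1.le) hs.1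
          linarith [hder]
        have hFanti : StrictAntiOn (F p C) (Icc m y) := by
          apply strictAntiOn_of_deriv_neg (convex_Icc m y) ((contF hp0 hp1 C).continuousOn)
          intro u hu
          rw [interior_Icc] at hu
          rw [(hasDerivAt_F hp0 hp1 C u).deriv]
          exact hF1neg u hu
        have hyI : y ∈ Icc (0:ℝ) (2 * L) := ⟨by linarith [hmo.1], min_le_right _ _⟩
        have hlt := hFanti (left_mem_Icc.2 hmy.le) (right_mem_Icc.2 hmy.le) hmy
        have hmy2 : F p C m ≤ F p C y := hmin hyI
        linarith
    · -- t > 2L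
      have hmono : MonotoneOn (F1 p C) (Icc (2 * L) t) := by
        apply F1_mono hp0 hp1
        intro s hs
        have h1 : 1 - p ≤ q p s := by
          have := q_mono hp0 hp1 hs.1
          rwa [hq2L] at this
        have h2 := q_lt_one hp0 hp1 s
        nlinarith [mul_nonneg (by linarith : (0:ℝ) ≤ q p s - (1 - p))
          (by linarith : (0:ℝ) ≤ q p s - p)]
      have hge : ∀ s ∈ Icc (2 * L) t, 0 ≤ F1 p C s := by
        intro s hs
        have := hmono (left_mem_Icc.2 ht2.le) hs hs.1
        linarith [hF12L]
      have hmonoF : MonotoneOn (F p C) (Icc (2 * L) t) := F_mono hp0 hp1 C (2 * L) t hge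
      have := hmonoF (left_mem_Icc.2 ht2.le) (right_mem_Icc.2 ht2.le) ht2.le
      linarith [hF2L]

lemma core (hp0 : 0 < p) (hp2 : p < 1/2) (t : ℝ) :
    (1 - p) * Real.exp (-t * p) + p * Real.exp (t * (1 - p)) ≤
      Real.exp ((1 - 2*p) / (4 * Real.log ((1 - p) / p)) * t^2) := by
  have hp1 : p < 1 := by linarith
  have hD := D_pos hp0 hp1 t
  have hF := F_nonneg hp0 hp2 t
  set C := (1 - 2*p) / (4 * Real.log ((1 - p) / p)) with hC
  have hlog : Real.log (D p t) ≤ C * t ^ 2 + p * t := by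
    rw [F] at hF; linarith
  have h2 : D p t ≤ Real.exp (C * t ^ 2 + p * t) := by
    rw [← Real.exp_log hD]
    exact Real.exp_le_exp.2 hlog
  have h3 : (1 - p) * Real.exp (-t * p) + p * Real.exp (t * (1 - p))
      = Real.exp (-(t * p)) * D p t := by
    have he : Real.exp (t * (1 - p)) = Real.exp (-(t * p)) * Real.exp t := by
      rw [← Real.exp_add]; ring_nf
    have he2 : Real.exp (-t * p) = Real.exp (-(t * p)) := by ring_nf
    rw [D, he, he2]; ring
  calc (1 - p) * Real.exp (-t * p) + p * Real.exp (t * (1 - p))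
      = Real.exp (-(t * p)) * D p t := h3
    _ ≤ Real.exp (-(t * p)) * Real.exp (C * t ^ 2 + p * t) := by
        exact mul_le_mul_of_nonneg_left h2 (Real.exp_pos _).le
    _ = Real.exp (C * t ^ 2) := by
        rw [← Real.exp_add]; congr 1; ring

end KS

/-- Kearns–Saul inequality: for `p ∈ (0,1)`, `p ≠ 1/2`, and all real `t`,
`(1-p)·e^{-tp} + p·e^{t(1-p)} ≤ exp((1-2p)/(4 log((1-p)/p)) · t²)`. -/
theorem kearns_saul (p t : ℝ) (hp0 : 0 < p) (hp1 : p < 1) (hp : p ≠ 1/2) :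
    (1 - p) * Real.exp (-t * p) + p * Real.exp (t * (1 - p)) ≤
      Real.exp ((1 - 2*p) / (4 * Real.log ((1 - p) / p)) * t^2) := by
  rcases lt_or_gt_of_ne hp with h | h
  · exact KS.core hp0 h t
  · have h1 : 0 < 1 - p := by linarith
    have h2 : 1 - p < 1/2 := by linarith
    have key := KS.core h1 h2 (-t)
    have e2 : - -t * (1 - p) = t * (1 - p) := by ring
    have e3 : -t * (1 - (1 - p)) = -t * p := by ring
    have e4 : (-t) ^ 2 = t ^ 2 := by ring
    have e1 : 1 - (1 - p) = p := by ring
    rw [e2, e3, e4, e1] at key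
    have hlogne : Real.log (1 - p) - Real.log p ≠ 0 := by
      have : Real.log (1 - p) < Real.log p := Real.log_lt_log h1 (by linarith)
      linarith
    have hc : (1 - 2 * (1 - p)) / (4 * Real.log (p / (1 - p)))
        = (1 - 2 * p) / (4 * Real.log ((1 - p) / p)) := by
      rw [Real.log_div (ne_of_gt hp0) (ne_of_gt h1), Real.log_div (ne_of_gt h1) (ne_of_gt hp0)]
      rw [div_eq_div_iff (by intro hz; apply hlogne; linarith [hz] : 4 * (Real.log p - Real.log (1 - p)) ≠ 0)
        (by intro hz; apply hlogne; linarith [hz] : 4 * (Real.log (1 - p) - Real.log p) ≠ 0)]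
      ring
    rw [hc] at key
    linarith
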